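/- There exists a constant c > 0 such that the following holds for the (1+1) EA with one-bit prior noise probability p ≤ 1/2 on LeadingOnes: for every n and every current search point x with LO(x) ≥ 2n/3, the probability that the current search point after one generation has LeadingOnes value at most n/2 (a 'fallback') is at least c·p. -/

import Mathlib

open Finset ENNReal

/-- A search point: a bit string of length `n`. -/
abbrev Point (n : ℕ) := Fin n → Bool

/-- The LeadingOnes fitness: the length of the longest all-ones prefix. -/
def LO {n : ℕ} (x : Point n) : ℕ :=
  (Finset.univ.filter fun i : Fin n => ∀ j : Fin n, j ≤ i → x j = true).card

/-- The all-ones string, the unique global optimum of LeadingOnes. -/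
def allOnes (n : ℕ) : Point n := fun _ => true

/-- Probability that standard bit mutation (flip each bit independently with
probability `1/n`) turns `x` into `y`. -/
noncomputable def mutProb (n : ℕ) (x y : Point n) : ℝ :=
  (1 / n) ^ hammingDist x y * (1 - 1 / n) ^ (n - hammingDist x y)

/-- Probability that one-bit prior noise with probability `p` turns `x` into `u`:
with probability `1 - p` no noise occurs, otherwise one uniformly random bit flips. -/
noncomputable def oneBitNoise (n : ℕ) (p : ℝ) (x u : Point n) : ℝ :=
  (if u = x then 1 - p else 0) + (if hammingDist x u = 1 then p / n else 0)

/-- Probability that offspring `y` is accepted against parent `x`, i.e. that the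
noisy fitness of `y` is at least the noisy fitness of `x` (noise applied
independently to parent and offspring). -/
noncomputable def accProb (n : ℕ) (noise : Point n → Point n → ℝ)
    (f : Point n → ℝ) (x y : Point n) : ℝ :=
  ∑ u : Point n, ∑ v : Point n,
    noise x u * noise y v * (if f u ≤ f v then 1 else 0)

/-- One-generation transition probability of a (1+1)-type algorithm with mutation
kernel `mutK`, prior-noise kernel `noise` and fitness `f`: mutation creates an
offspring, which replaces the parent iff its noisy fitness is at least the
parent's noisy fitness. -/
noncomputable def step (n : ℕ) (mutK noise : Point n → Point n → ℝ)
    (f : Point n → ℝ) (x z : Point n) : ℝ :=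
  mutK x z * accProb n noise f x z
    + (if z = x then ∑ y : Point n, mutK x y * (1 - accProb n noise f x y) else 0)

/-- One-generation transition probability of the (1+1) EA with one-bit prior
noise probability `p` on LeadingOnes. -/
noncomputable def stepEA (n : ℕ) (p : ℝ) : Point n → Point n → ℝ :=
  step n (mutProb n) (oneBitNoise n p) fun x => (LO x : ℝ)

/-- Probability that a Markov chain with transition matrix `P` started in `x`
does not visit `opt` within the first `t` generations (time `0` included). -/
noncomputable def survive (n : ℕ) (P : Point n → Point n → ℝ) (opt : Point n) :
    ℕ → Point n → ℝ
  | 0, x => if x = opt then 0 else 1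
  | t + 1, x => if x = opt then 0 else ∑ y : Point n, P x y * survive n P opt t y

/-- Expected optimisation time, measured in fitness evaluations
(`evalsPerGen` evaluations per generation), of a Markov chain with transition
matrix `P` started from a uniformly random search point, until it first hits
`opt`; computed as `evalsPerGen · Σ_t P(T > t)`. -/
noncomputable def expectedTime (n : ℕ) (P : Point n → Point n → ℝ)
    (opt : Point n) (evalsPerGen : ℕ) : ℝ≥0∞ :=
  (evalsPerGen : ℝ≥0∞) * ∑' t : ℕ, ENNReal.ofReal
    ((Fintype.card (Point n) : ℝ)⁻¹ * ∑ x : Point n, survive n P opt t x)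

/-- Expected optimisation time (number of fitness evaluations, two per
generation) of the (1+1) EA with one-bit prior noise probability `p` on
LeadingOnes with problem size `n`, from a uniformly random initial search point. -/
noncomputable def EAtime (n : ℕ) (p : ℝ) : ℝ≥0∞ :=
  expectedTime n (stepEA n p) (allOnes n) 2

/-! ### Auxiliary definitions and lemmas -/

/-- Flip bit `i` of `x`. -/
def flipB {n : ℕ} (x : Point n) (i : Fin n) : Point n := Function.update x i (!x i)

section Aux

variable {n : ℕ}

lemma flipB_apply_self (x : Point n) (i : Fin n) : flipB x i i = !x i := Function.update_self _ _ _

lemma flipB_apply_ne (x : Point n) {i j : Fin n} (h : j ≠ i) : flipB x i j = x j :=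
  Function.update_of_ne h _ _

lemma flipB_ne (x : Point n) (i : Fin n) : flipB x i ≠ x := by
  intro h
  have := congrFun h i
  rw [flipB_apply_self] at this
  simp at this

lemma flipB_injective (x : Point n) : Function.Injective (flipB x) := by
  intro a b h
  by_contra hab
  have h1 := congrFun h a
  rw [flipB_apply_self, flipB_apply_ne x (fun hh => hab hh)] at h1
  simp at h1

lemma hamming_flipB (x : Point n) (i : Fin n) : hammingDist x (flipB x i) = 1 := by
  have : ({j | x j ≠ flipB x i j} : Finset (Fin n)) = {i} := by
    ext j
    by_cases hj : j = i
    · subst hj; simp [flipB_apply_self]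
    · simp [hj, flipB_apply_ne x hj]
  rw [hammingDist, this, Finset.card_singleton]

lemma LO_le_of_false {x : Point n} {k : Fin n} (h : x k = false) : LO x ≤ (k : ℕ) := by
  have hsub : (Finset.univ.filter fun i : Fin n => ∀ j : Fin n, j ≤ i → x j = true)
      ⊆ Finset.Iio k := by
    intro i hi
    simp only [Finset.mem_filter, Finset.mem_univ, true_and] at hi
    rw [Finset.mem_Iio]
    by_contra hik
    push_neg at hik
    have := hi k hik
    rw [h] at this
    exact Bool.false_ne_true this
  calc LO x ≤ (Finset.Iio k).card := Finset.card_le_card hsub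
    _ = (k : ℕ) := Fin.card_Iio k

lemma le_LO {x : Point n} {m : ℕ} (hm : m ≤ n) (h : ∀ j : Fin n, (j:ℕ) < m → x j = true) :
    m ≤ LO x := by
  have hlt : ∀ a ∈ Finset.range m, a < n := fun a ha =>
    lt_of_lt_of_le (Finset.mem_range.mp ha) hm
  have hsub : (Finset.range m).attachFin hlt ⊆
      Finset.univ.filter (fun i : Fin n => ∀ j : Fin n, j ≤ i → x j = true) := by
    intro i hi
    rw [Finset.mem_attachFin, Finset.mem_range] at hi
    simp only [Finset.mem_filter, Finset.mem_univ, true_and]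
    intro j hj
    exact h j (lt_of_le_of_lt (Fin.le_def.mp hj) hi)
  calc m = ((Finset.range m).attachFin hlt).card := by
        rw [Finset.card_attachFin, Finset.card_range]
    _ ≤ _ := Finset.card_le_card hsub

lemma true_of_lt_LO {x : Point n} {k : Fin n} (h : (k:ℕ) < LO x) : x k = true := by
  by_contra hk
  have hf : x k = false := by simpa using hk
  have := LO_le_of_false hf
  omega

lemma LO_flip_le {x : Point n} {i : Fin n} (h : (i:ℕ) < LO x) : LO (flipB x i) ≤ (i:ℕ) := by
  apply LO_le_of_false
  rw [flipB_apply_self, true_of_lt_LO h]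
  rfl

lemma le_LO_flip {x : Point n} {i : Fin n} (h : (i:ℕ) < LO x) : (i:ℕ) ≤ LO (flipB x i) := by
  apply le_LO (le_of_lt i.isLt)
  intro j hj
  have hne : j ≠ i := fun he => by subst he; omega
  rw [flipB_apply_ne x hne]
  exact true_of_lt_LO (lt_trans (show (j:ℕ) < (i:ℕ) from hj) h)

lemma one_third_le_pow (hn : 1 ≤ n) : (1/3 : ℝ) ≤ (1 - 1/(n:ℝ))^(n-1) := by
  rcases eq_or_lt_of_le hn with h1 | h2
  · rw [← h1]; norm_num
  · set m := n - 1 with hm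
    have hm1 : 1 ≤ m := by omega
    have hmn : n = m + 1 := by omega
    have hM : (0:ℝ) < m := by exact_mod_cast hm1
    have hbase : (1 : ℝ) - 1/(n:ℝ) = (m:ℝ)/((m:ℝ)+1) := by
      rw [hmn]; push_cast; field_simp; ring
    have hkey : ((1:ℝ) + 1/(m:ℝ))^m ≤ Real.exp 1 := by
      have h2' : (1:ℝ) + 1/(m:ℝ) ≤ Real.exp (1/(m:ℝ)) := by
        have := Real.add_one_le_exp (1/(m:ℝ)); linarith
      have h3 : ((1:ℝ)+1/(m:ℝ))^m ≤ (Real.exp (1/(m:ℝ)))^m :=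
        pow_le_pow_left₀ (by positivity) h2' m
      rwa [← Real.exp_nat_mul, mul_one_div, div_self (ne_of_gt hM)] at h3
    have hfrac : ((m:ℝ)+1)/(m:ℝ) = 1 + 1/(m:ℝ) := by field_simp
    have hA : (0:ℝ) < ((1:ℝ) + 1/(m:ℝ))^m := by positivity
    have hexp3 : Real.exp 1 ≤ 3 := by
      have := Real.exp_one_lt_d9; linarith
    have h3' : ((1:ℝ) + 1/(m:ℝ))^m ≤ 3 := le_trans hkey hexp3
    have hinv : (1/3 : ℝ) ≤ 1/(((1:ℝ) + 1/(m:ℝ))^m) := one_div_le_one_div_of_le hA h3'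
    have heq : ((m:ℝ)/((m:ℝ)+1))^(m) = 1/(((1:ℝ) + 1/(m:ℝ))^m) := by
      rw [← hfrac, div_pow, div_pow, one_div, inv_div]
    rw [hbase, heq]
    exact hinv

lemma mutProb_nonneg (n : ℕ) (x y : Point n) : 0 ≤ mutProb n x y := by
  unfold mutProb
  have h : (0:ℝ) ≤ 1 - 1/(n:ℝ) := by
    rcases Nat.eq_zero_or_pos n with h0 | h0
    · subst h0; norm_num
    · have h1 : (1:ℝ) ≤ n := by exact_mod_cast h0
      have : 1/(n:ℝ) ≤ 1 := by
        rw [div_le_one (by linarith)]; linarith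
      linarith
  exact mul_nonneg (pow_nonneg (by positivity) _) (pow_nonneg h _)

lemma oneBitNoise_nonneg {p : ℝ} (hp0 : 0 ≤ p) (hp1 : p ≤ 1) (x u : Point n) :
    0 ≤ oneBitNoise n p x u := by
  unfold oneBitNoise
  have h1 : (0:ℝ) ≤ p / n := div_nonneg hp0 (Nat.cast_nonneg n)
  apply add_nonneg <;> split_ifs <;> first | linarith | exact le_refl 0

lemma accProb_nonneg {p : ℝ} (hp0 : 0 ≤ p) (hp1 : p ≤ 1) (f : Point n → ℝ) (x y : Point n) :
    0 ≤ accProb n (oneBitNoise n p) f x y := by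
  apply Finset.sum_nonneg; intro u _
  apply Finset.sum_nonneg; intro v _
  have h1 := oneBitNoise_nonneg hp0 hp1 x u
  have h2 := oneBitNoise_nonneg hp0 hp1 y v
  have h3 : (0:ℝ) ≤ if f u ≤ f v then 1 else 0 := by split_ifs <;> norm_num
  exact mul_nonneg (mul_nonneg h1 h2) h3

lemma noise_self (p : ℝ) (z : Point n) : oneBitNoise n p z z = 1 - p := by
  unfold oneBitNoise
  rw [if_pos rfl, hammingDist_self, if_neg (by norm_num), add_zero]

lemma noise_flip (p : ℝ) (x : Point n) (j : Fin n) :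
    oneBitNoise n p x (flipB x j) = p / n := by
  unfold oneBitNoise
  rw [if_neg (flipB_ne x j), if_pos (hamming_flipB x j), zero_add]

lemma acc_ge {p : ℝ} (hp0 : 0 ≤ p) (hp1 : p ≤ 1) {x : Point n} {i : Fin n}
    (hiLO : (i:ℕ) < LO x) :
    ((i:ℕ) + 1 : ℝ) * (p / n * (1 - p)) ≤
      accProb n (oneBitNoise n p) (fun y => (LO y : ℝ)) x (flipB x i) := by
  classical
  set z := flipB x i with hz
  set g : Point n → ℝ := fun u => ∑ v : Point n,
      oneBitNoise n p x u * oneBitNoise n p z v *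
        (if (LO u : ℝ) ≤ (LO v : ℝ) then 1 else 0) with hg
  have hterm0 : ∀ u v : Point n, 0 ≤ oneBitNoise n p x u * oneBitNoise n p z v *
      (if (LO u : ℝ) ≤ (LO v : ℝ) then 1 else 0) := by
    intro u v
    have h1 := oneBitNoise_nonneg hp0 hp1 x u
    have h2 := oneBitNoise_nonneg hp0 hp1 z v
    have h3 : (0:ℝ) ≤ if (LO u:ℝ) ≤ (LO v:ℝ) then 1 else 0 := by split_ifs <;> norm_num
    exact mul_nonneg (mul_nonneg h1 h2) h3
  have hg0 : ∀ u, 0 ≤ g u := fun u => Finset.sum_nonneg (fun v _ => hterm0 u v)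
  have hkey : ∀ j ∈ Finset.Iic i, p / n * (1 - p) ≤ g (flipB x j) := by
    intro j hj
    rw [Finset.mem_Iic] at hj
    have hjn : (j:ℕ) ≤ (i:ℕ) := Fin.le_def.mp hj
    have hjLO : (j:ℕ) < LO x := lt_of_le_of_lt hjn hiLO
    have hind : (LO (flipB x j) : ℝ) ≤ (LO z : ℝ) := by
      have h1 : LO (flipB x j) ≤ (j:ℕ) := LO_flip_le hjLO
      have h2 : (i:ℕ) ≤ LO z := le_LO_flip hiLO
      have : LO (flipB x j) ≤ LO z := le_trans h1 (le_trans hjn h2)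
      exact_mod_cast this
    have hone : oneBitNoise n p x (flipB x j) * oneBitNoise n p z z *
        (if (LO (flipB x j):ℝ) ≤ (LO z:ℝ) then 1 else 0) = p / n * (1 - p) := by
      rw [noise_flip, noise_self, if_pos hind, mul_one]
    calc p / n * (1 - p) = _ := hone.symm
      _ ≤ g (flipB x j) :=
        Finset.single_le_sum (fun v _ => hterm0 (flipB x j) v) (Finset.mem_univ z)
  have himg : ∑ u ∈ (Finset.Iic i).image (flipB x), g u
      = ∑ j ∈ Finset.Iic i, g (flipB x j) :=
    Finset.sum_image (fun a _ b _ h => flipB_injective x h)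
  have hsum1 : ∑ j ∈ Finset.Iic i, (p / n * (1 - p)) ≤ ∑ j ∈ Finset.Iic i, g (flipB x j) :=
    Finset.sum_le_sum hkey
  have hconst : ∑ j ∈ Finset.Iic i, (p / n * (1 - p)) = ((i:ℕ)+1 : ℝ) * (p / n * (1-p)) := by
    rw [Finset.sum_const, Fin.card_Iic, nsmul_eq_mul]
    push_cast
    ring
  have hsub : ∑ u ∈ (Finset.Iic i).image (flipB x), g u ≤ ∑ u ∈ Finset.univ, g u :=
    Finset.sum_le_sum_of_subset_of_nonneg (Finset.subset_univ _) (fun u _ _ => hg0 u)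
  have hacc : accProb n (oneBitNoise n p) (fun y => (LO y : ℝ)) x z = ∑ u ∈ Finset.univ, g u := rfl
  rw [hacc]
  calc ((i:ℕ)+1:ℝ) * (p/n*(1-p)) = ∑ j ∈ Finset.Iic i, (p/n*(1-p)) := hconst.symm
    _ ≤ ∑ j ∈ Finset.Iic i, g (flipB x j) := hsum1
    _ = ∑ u ∈ (Finset.Iic i).image (flipB x), g u := himg.symm
    _ ≤ ∑ u ∈ Finset.univ, g u := hsub

lemma step_bound (hn : 0 < n) {p : ℝ} (hp0 : 0 ≤ p) (hp2 : p ≤ 1/2)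
    {x : Point n} {i : Fin n} (hiLO : (i:ℕ) < LO x) (h4 : n ≤ 4*(i:ℕ)+4) :
    p / (24*n) ≤ stepEA n p x (flipB x i) := by
  have hp1 : p ≤ 1 := by linarith
  have hN : (0:ℝ) < n := by exact_mod_cast hn
  have hstep : stepEA n p x (flipB x i) =
      mutProb n x (flipB x i) *
        accProb n (oneBitNoise n p) (fun y => (LO y:ℝ)) x (flipB x i) := by
    unfold stepEA step
    rw [if_neg (flipB_ne x i), add_zero]
  rw [hstep]
  have hmut : 1/(3*(n:ℝ)) ≤ mutProb n x (flipB x i) := by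
    unfold mutProb
    rw [hamming_flipB, pow_one]
    have h3 := one_third_le_pow hn
    have heq : 1/(3*(n:ℝ)) = (1/(n:ℝ)) * (1/3) := by ring
    rw [heq]
    exact mul_le_mul_of_nonneg_left h3 (by positivity)
  have hacc1 := acc_ge hp0 hp1 hiLO
  have hacc2 : p/8 ≤ ((i:ℕ)+1:ℝ) * (p/(n:ℝ)*(1-p)) := by
    have hi4 : (n:ℝ)/4 ≤ ((i:ℕ):ℝ)+1 := by
      have : (n:ℝ) ≤ 4*((i:ℕ):ℝ)+4 := by exact_mod_cast h4
      linarith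
    have hpn : (0:ℝ) ≤ p/(n:ℝ) := div_nonneg hp0 (le_of_lt hN)
    have h12 : p/(n:ℝ) * (1/2) ≤ p/(n:ℝ) * (1-p) :=
      mul_le_mul_of_nonneg_left (by linarith) hpn
    have hmm : (n:ℝ)/4 * (p/(n:ℝ) * (1/2)) ≤ (((i:ℕ):ℝ)+1) * (p/(n:ℝ)*(1-p)) :=
      mul_le_mul hi4 h12 (by positivity) (by linarith)
    have heq : (n:ℝ)/4 * (p/(n:ℝ) * (1/2)) = p/8 := by
      field_simp
      ring
    linarith
  have hacc : p/8 ≤ accProb n (oneBitNoise n p) (fun y => (LO y:ℝ)) x (flipB x i) :=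
    le_trans hacc2 hacc1
  have hmut0 : (0:ℝ) ≤ mutProb n x (flipB x i) := mutProb_nonneg n x _
  have hp8 : (0:ℝ) ≤ p/8 := by linarith
  calc p/(24*(n:ℝ)) = (1/(3*(n:ℝ))) * (p/8) := by
        ring
    _ ≤ mutProb n x (flipB x i) *
        accProb n (oneBitNoise n p) (fun y => (LO y:ℝ)) x (flipB x i) :=
      mul_le_mul hmut hacc hp8 hmut0

end Aux

/-- **Lemma (probability of a fallback).**
There exists a constant `c > 0` such that for the (1+1) EA with one-bit prior
noise probability `p ≤ 1/2` on LeadingOnes: for every `n` and every current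
search point `x` with `LO(x) ≥ 2n/3`, the probability that the next current
search point has LeadingOnes value at most `n/2` (a "fallback") is at least `c·p`. -/
theorem EA_LeadingOnes_fallback :
    ∃ c : ℝ, 0 < c ∧
      ∀ n : ℕ, ∀ p : ℝ, 0 ≤ p → p ≤ 1 / 2 → ∀ x : Point n,
        2 * (n : ℝ) / 3 ≤ (LO x : ℝ) →
        c * p ≤ ∑ z ∈ Finset.univ.filter
            (fun z : Point n => (LO z : ℝ) ≤ (n : ℝ) / 2),
          stepEA n p x z := by
  classical
  refine ⟨1/192, by norm_num, ?_⟩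
  intro n p hp0 hp2 x hx
  rcases Nat.eq_zero_or_pos n with hn0 | hn
  · subst hn0
    have hxz : ∀ z : Point 0, z = x := fun z => Subsingleton.elim z x
    have huniv : (Finset.univ : Finset (Point 0)) = {x} := by
      ext z
      simp only [Finset.mem_univ, Finset.mem_singleton, true_iff]
      exact hxz z
    have hfilter : (Finset.univ.filter fun z : Point 0 => (LO z:ℝ) ≤ ((0:ℕ):ℝ)/2) = {x} := by
      rw [Finset.filter_true_of_mem, huniv]
      intro z _
      have hz0 : LO z = 0 := by simp [LO]
      rw [hz0]; norm_num
    rw [hfilter, Finset.sum_singleton]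
    have hone : stepEA 0 p x x = 1 := by
      unfold stepEA step
      rw [if_pos rfl, huniv, Finset.sum_singleton]
      have hm : mutProb 0 x x = 1 := by
        unfold mutProb
        rw [hammingDist_self]
        norm_num
      rw [hm]; ring
    rw [hone]; linarith
  · have hN : (0:ℝ) < n := by exact_mod_cast hn
    have hp1 : p ≤ 1 := by linarith
    have hIb : ∀ m ∈ Finset.Icc ((n-1)/4) (n/2), m < n := by
      intro m hm; rw [Finset.mem_Icc] at hm; omega
    set S : Finset (Fin n) := (Finset.Icc ((n-1)/4) (n/2)).attachFin hIb with hS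
    have hScard : n ≤ 8 * S.card := by
      rw [hS, Finset.card_attachFin, Nat.card_Icc]; omega
    have hiprop : ∀ i ∈ S, (i:ℕ) < LO x ∧ n ≤ 4*(i:ℕ)+4 ∧ 2*(i:ℕ) ≤ n := by
      intro i hi
      rw [hS, Finset.mem_attachFin, Finset.mem_Icc] at hi
      have h2 : 2*(i:ℕ) ≤ n := by omega
      have h4 : n ≤ 4*(i:ℕ)+4 := by omega
      have hLO : (i:ℕ) < LO x := by
        have hir : ((i:ℕ):ℝ) ≤ (n:ℝ)/2 := by
          have hc : ((2*(i:ℕ) : ℕ):ℝ) ≤ ((n:ℕ):ℝ) := by exact_mod_cast h2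
          push_cast at hc
          linarith
        have hlt : ((i:ℕ):ℝ) < (LO x : ℝ) := by linarith
        exact_mod_cast hlt
      exact ⟨hLO, h4, h2⟩
    have hsub : S.image (flipB x) ⊆
        Finset.univ.filter (fun z : Point n => (LO z : ℝ) ≤ (n:ℝ)/2) := by
      intro z hzmem
      rw [Finset.mem_image] at hzmem
      obtain ⟨i, hiS, rfl⟩ := hzmem
      obtain ⟨hLO, h4, h2⟩ := hiprop i hiS
      rw [Finset.mem_filter]
      refine ⟨Finset.mem_univ _, ?_⟩
      have h1 : ((LO (flipB x i)):ℝ) ≤ ((i:ℕ):ℝ) := by exact_mod_cast LO_flip_le hLO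
      have h2r : ((i:ℕ):ℝ) ≤ (n:ℝ)/2 := by
        have hc : ((2*(i:ℕ) : ℕ):ℝ) ≤ ((n:ℕ):ℝ) := by exact_mod_cast h2
        push_cast at hc
        linarith
      linarith
    have hnonneg : ∀ z ∈ Finset.univ.filter (fun z : Point n => (LO z : ℝ) ≤ (n:ℝ)/2),
        z ∉ S.image (flipB x) → 0 ≤ stepEA n p x z := by
      intro z hzmem _
      rw [Finset.mem_filter] at hzmem
      have hzx : z ≠ x := by
        intro h
        subst h
        linarith [hzmem.2, hx]
      have heq : stepEA n p x z =
          mutProb n x z * accProb n (oneBitNoise n p) (fun y => (LO y:ℝ)) x z := by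
        unfold stepEA step
        rw [if_neg hzx, add_zero]
      rw [heq]
      exact mul_nonneg (mutProb_nonneg n x z) (accProb_nonneg hp0 hp1 _ x z)
    have himg : ∑ z ∈ S.image (flipB x), stepEA n p x z
        = ∑ i ∈ S, stepEA n p x (flipB x i) :=
      Finset.sum_image (fun a _ b _ h => flipB_injective x h)
    have hterms : ∀ i ∈ S, p/(24*(n:ℝ)) ≤ stepEA n p x (flipB x i) := by
      intro i hi
      obtain ⟨hLO, h4, _⟩ := hiprop i hi
      exact step_bound hn hp0 hp2 hLO h4
    have hsum : (S.card : ℝ) * (p/(24*(n:ℝ))) ≤ ∑ i ∈ S, stepEA n p x (flipB x i) := by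
      calc (S.card:ℝ) * (p/(24*(n:ℝ))) = ∑ _i ∈ S, p/(24*(n:ℝ)) := by
            rw [Finset.sum_const, nsmul_eq_mul]
        _ ≤ _ := Finset.sum_le_sum hterms
    have hfinal : 1/192 * p ≤ (S.card : ℝ) * (p/(24*(n:ℝ))) := by
      have hc : (n:ℝ)/8 ≤ (S.card:ℝ) := by
        have hcc : ((n:ℕ):ℝ) ≤ ((8 * S.card : ℕ):ℝ) := by exact_mod_cast hScard
        push_cast at hcc
        linarith
      have hpn : (0:ℝ) ≤ p/(24*(n:ℝ)) := div_nonneg hp0 (by positivity)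
      have hmul := mul_le_mul_of_nonneg_right hc hpn
      have heq : (n:ℝ)/8 * (p/(24*(n:ℝ))) = 1/192*p := by
        field_simp
        ring
      linarith
    calc (1:ℝ)/192 * p ≤ (S.card:ℝ)*(p/(24*(n:ℝ))) := hfinal
      _ ≤ ∑ i ∈ S, stepEA n p x (flipB x i) := hsum
      _ = ∑ z ∈ S.image (flipB x), stepEA n p x z := himg.symm
      _ ≤ _ := Finset.sum_le_sum_of_subset_of_nonneg hsub hnonneg
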